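/- Let q ≥ 1 be an integer and let ρ' denote the ramification map z' ↦ z = z'^q. For a polar part φ in the variable z, define its pullback ρ'*φ in the variable z' by (ρ'*φ)(z') = φ(z'^q). Then for all polar parts ψ, φ and all θ' ∈ ℝ: ρ'*ψ ≤_{θ'} ρ'*φ if and only if ψ ≤_{qθ'} φ. (Pullback by a cyclic ramification is compatible with the order between polar parts in a direction, with directions transforming by θ = qθ'.) -/
import Mathlib


open Real

/-- Evaluation of a polar part, represented by a polynomial `P` (with zero constant
coefficient) recording the coefficients of the negative powers of `z`:
`P = ∑ aⱼ Xʲ` represents `η(z) = ∑ aⱼ z⁻ʲ`. -/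
noncomputable def polarEval (P : Polynomial ℂ) (z : ℂ) : ℂ := P.eval z⁻¹

/-- The real part of the polar part `P` is negative on a small open sector
`nb(θ)` around the direction `θ`. -/
def sectorNeg (P : Polynomial ℂ) (θ : ℝ) : Prop :=
  ∃ ε > (0 : ℝ), ∃ δ > (0 : ℝ), ∀ θ' : ℝ, |θ' - θ| < ε → ∀ r : ℝ, 0 < r → r < δ →
    (polarEval P ((r : ℂ) * Complex.exp (Complex.I * (θ' : ℂ)))).re < 0

/-- The partial order `ψ ≤_θ φ` between polar parts in the direction `θ`. -/
def leDir (ψ φ : Polynomial ℂ) (θ : ℝ) : Prop := ψ = φ ∨ sectorNeg (ψ - φ) θ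

/-- The strict order `ψ <_θ φ` between polar parts in the direction `θ`. -/
def ltDir (ψ φ : Polynomial ℂ) (θ : ℝ) : Prop := leDir ψ φ θ ∧ ψ ≠ φ

lemma polarEval_comp_pow (P : Polynomial ℂ) (q : ℕ) (r θ : ℝ) :
    polarEval (P.comp (Polynomial.X ^ q)) ((r : ℂ) * Complex.exp (Complex.I * (θ : ℂ)))
      = polarEval P (((r ^ q : ℝ) : ℂ) * Complex.exp (Complex.I * ((q * θ : ℝ) : ℂ))) := by
  unfold polarEval
  rw [Polynomial.eval_comp, Polynomial.eval_pow, Polynomial.eval_X, inv_pow]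
  congr 2
  rw [mul_pow, ← Complex.exp_nat_mul]
  push_cast
  ring_nf

lemma sectorNeg_comp_pow (P : Polynomial ℂ) (q : ℕ) (hq : 1 ≤ q) (θ' : ℝ) :
    sectorNeg (P.comp (Polynomial.X ^ q)) θ' ↔ sectorNeg P ((q : ℝ) * θ') := by
  have hqn : q ≠ 0 := by omega
  have hq0 : (0 : ℝ) < q := by exact_mod_cast hq
  constructor
  · rintro ⟨ε, hε, δ, hδ, h⟩
    refine ⟨q * ε, by positivity, δ ^ q, by positivity, ?_⟩
    intro α hα s hs hsδ
    set r : ℝ := s ^ (q : ℝ)⁻¹ with hr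
    have hrpos : 0 < r := Real.rpow_pos_of_pos hs _
    have hrq : r ^ q = s := Real.rpow_inv_natCast_pow hs.le hqn
    have hrδ : r < δ := by
      have : r < (δ ^ q) ^ (q : ℝ)⁻¹ :=
        Real.rpow_lt_rpow hs.le hsδ (by positivity)
      rwa [← Real.rpow_natCast δ q, ← Real.rpow_mul hδ.le,
        mul_inv_cancel₀ (by positivity), Real.rpow_one] at this
    have hang : |α / q - θ'| < ε := by
      have : α / q - θ' = (α - q * θ') / q := by field_simp
      rw [this, abs_div, abs_of_pos hq0, div_lt_iff₀ hq0]
      linarith [hα]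
    have key := h (α / q) hang r hrpos hrδ
    rw [polarEval_comp_pow, hrq] at key
    rwa [mul_div_cancel₀ α (ne_of_gt hq0)] at key
  · rintro ⟨ε, hε, δ, hδ, h⟩
    refine ⟨ε / q, by positivity, δ ^ (q : ℝ)⁻¹, Real.rpow_pos_of_pos hδ _, ?_⟩
    intro α hα r hrpos hrδ
    have hrq : r ^ q < δ := by
      have := pow_lt_pow_left₀ hrδ hrpos.le hqn
      rwa [← Real.rpow_natCast (δ ^ (q:ℝ)⁻¹) q, ← Real.rpow_mul hδ.le,
        inv_mul_cancel₀ (by positivity), Real.rpow_one] at this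
    have hang : |(q : ℝ) * α - q * θ'| < ε := by
      rw [← mul_sub, abs_mul, abs_of_pos hq0]
      calc (q : ℝ) * |α - θ'| < q * (ε / q) := by
            exact mul_lt_mul_of_pos_left hα hq0
        _ = ε := by field_simp
    have key := h ((q : ℝ) * α) hang (r ^ q) (by positivity) hrq
    rw [polarEval_comp_pow]
    exact key

theorem leDir_ramification_equivariant (q : ℕ) (hq : 1 ≤ q)
    (ψ φ : Polynomial ℂ) (hψ : ψ.coeff 0 = 0) (hφ : φ.coeff 0 = 0) (θ' : ℝ) :
    leDir (ψ.comp (Polynomial.X ^ q)) (φ.comp (Polynomial.X ^ q)) θ'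
      ↔ leDir ψ φ ((q : ℝ) * θ') := by
  have hinj : ψ.comp (Polynomial.X ^ q) = φ.comp (Polynomial.X ^ q) ↔ ψ = φ := by
    constructor
    · intro h
      apply Polynomial.funext
      intro w
      obtain ⟨v, hv⟩ : ∃ v : ℂ, v ^ q = w := by
        exact IsAlgClosed.exists_pow_nat_eq w (by omega)
      have := congrArg (Polynomial.eval v) h
      simpa [Polynomial.eval_comp, hv] using this
    · intro h; rw [h]
  unfold leDir
  rw [hinj, ← Polynomial.sub_comp, sectorNeg_comp_pow _ q hq]
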